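/- Let N ≥ 2, β ∈ (0,N), and λ > 0. Define for t > 0 the function u(t) = log( ((N/(N−1))^{N−1} (N−β)^N λ^N) / (1 + λ^{N/(N−1)} t^{(N−β)/(N−1)})^N ). Then u satisfies the weighted radial N-Laplacian ODE: (t^{N−1} (−u'(t))^{N−1})' = t^{N−1−β} e^{u(t)} for all t > 0. -/

import Mathlib

theorem stmt10 (N : ℕ) (hN : 2 ≤ N) (β lam : ℝ) (hβ : 0 < β) (hβN : β < N)
    (hlam : 0 < lam) (u : ℝ → ℝ)
    (hu : ∀ t : ℝ, 0 < t →
      u t = Real.log ((((N : ℝ) / (N - 1)) ^ (N - 1) * ((N : ℝ) - β) ^ N * lam ^ N) /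
        (1 + lam ^ ((N : ℝ) / (N - 1)) * t ^ (((N : ℝ) - β) / (N - 1))) ^ N)) :
    ∀ t : ℝ, 0 < t →
      deriv (fun s => s ^ (N - 1) * (-(deriv u s)) ^ (N - 1)) t =
        t ^ ((N : ℝ) - 1 - β) * Real.exp (u t) := by
  set n : ℕ := N - 1 with hn_def
  have hn1 : 1 ≤ n := by omega
  have hnN : n + 1 = N := by omega
  have hN1 : (0:ℝ) < (N:ℝ) - 1 := by
    have : (2:ℝ) ≤ (N:ℝ) := by exact_mod_cast hN
    linarith
  have hncast : (n : ℝ) = (N : ℝ) - 1 := by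
    have : ((n:ℝ) + 1) = (N:ℝ) := by exact_mod_cast congrArg (Nat.cast : ℕ → ℝ) hnN
    linarith
  set r : ℝ := (N : ℝ) / ((N:ℝ) - 1) with hr_def
  set a : ℝ := lam ^ r with ha_def
  set q : ℝ := (N:ℝ) - β with hq_def
  set p : ℝ := q / ((N:ℝ) - 1) with hp_def
  set C : ℝ := r ^ n * q ^ N * lam ^ N with hC_def
  have hq0 : 0 < q := by rw [hq_def]; linarith
  have hp0 : 0 < p := div_pos hq0 hN1
  have ha0 : 0 < a := Real.rpow_pos_of_pos hlam r
  have hC0 : 0 < C := by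
    have hr0 : 0 < r := div_pos (by positivity) hN1
    positivity
  have hden : ∀ s : ℝ, 0 < s → 0 < 1 + a * s ^ p := by
    intro s hs
    have h1 : 0 < s ^ p := Real.rpow_pos_of_pos hs p
    nlinarith [mul_pos ha0 h1]
  have hasD_h : ∀ s : ℝ, 0 < s →
      HasDerivAt (fun x : ℝ => 1 + a * x ^ p) (a * (p * s ^ (p - 1))) s := by
    intro s hs
    exact ((Real.hasDerivAt_rpow_const (Or.inl hs.ne')).const_mul a).const_add 1
  -- derivative of u
  have hderivu : ∀ s : ℝ, 0 < s →
      deriv u s = -((N:ℝ) * (a * (p * s ^ (p - 1))) / (1 + a * s ^ p)) := by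
    intro s hs
    have hg : HasDerivAt (fun x : ℝ => Real.log C - (N:ℝ) * Real.log (1 + a * x ^ p))
        (-((N:ℝ) * (a * (p * s ^ (p - 1))) / (1 + a * s ^ p))) s := by
      have h1 := ((hasD_h s hs).log (hden s hs).ne').const_mul (N:ℝ)
      have h2 := (hasDerivAt_const s (Real.log C)).sub h1
      exact h2.congr_deriv (by ring)
    have heq : u =ᶠ[nhds s] fun x => Real.log C - (N:ℝ) * Real.log (1 + a * x ^ p) := by
      filter_upwards [isOpen_Ioi.mem_nhds hs] with x hx
      rw [hu x hx, Real.log_div hC0.ne' (pow_ne_zero _ (hden x hx).ne'), Real.log_pow]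
    rw [heq.deriv_eq]
    exact hg.deriv
  set K : ℝ := ((N:ℝ) * (a * p)) ^ n with hK_def
  have hKq : K * q = C := by
    have han : a ^ n = lam ^ N := by
      rw [ha_def, ← Real.rpow_natCast (lam ^ r) n, ← Real.rpow_mul hlam.le]
      rw [hncast, hr_def]
      rw [div_mul_cancel₀ _ hN1.ne']
      exact Real.rpow_natCast lam N
    have hqN : q ^ N = q ^ n * q := by rw [← hnN, pow_succ]
    calc K * q = (N:ℝ) ^ n * a ^ n * p ^ n * q := by rw [hK_def, mul_pow, mul_pow]; ring
      _ = (N:ℝ) ^ n * lam ^ N * (q ^ n / ((N:ℝ) - 1) ^ n) * q := by rw [han, hp_def, div_pow]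
      _ = r ^ n * (q ^ n * q) * lam ^ N := by rw [hr_def, div_pow]; ring
      _ = C := by rw [hC_def, hqN]
  intro t ht
  have hdent := hden t ht
  -- rewrite the flux function near t
  have hfun : (fun s : ℝ => s ^ n * (-(deriv u s)) ^ n) =ᶠ[nhds t]
      fun s : ℝ => K * s ^ q / (1 + a * s ^ p) ^ n := by
    filter_upwards [isOpen_Ioi.mem_nhds ht] with x hx
    rw [hderivu x hx, neg_neg]
    have e1 : x ^ n * (x ^ (p - 1)) ^ n = x ^ q := by
      rw [← Real.rpow_natCast x n, ← Real.rpow_natCast (x ^ (p - 1)) n,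
        ← Real.rpow_mul (le_of_lt hx), ← Real.rpow_add hx]
      congr 1
      rw [hncast, hp_def]
      field_simp
      ring
    have e2 : (N:ℝ) * (a * (p * x ^ (p - 1))) = ((N:ℝ) * (a * p)) * x ^ (p - 1) := by ring
    rw [div_pow, e2, mul_pow, ← hK_def, ← e1]
    ring
  have hd := ((Real.hasDerivAt_rpow_const (p := q) (Or.inl ht.ne')).const_mul K).div
    ((hasD_h t ht).pow n) (pow_ne_zero _ hdent.ne')
  have hdv : deriv (fun s : ℝ => K * s ^ q / (1 + a * s ^ p) ^ n) t =
      (K * (q * t ^ (q - 1)) * (1 + a * t ^ p) ^ n -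
        K * t ^ q * ((n:ℝ) * (1 + a * t ^ p) ^ (n - 1) * (a * (p * t ^ (p - 1))))) /
        ((1 + a * t ^ p) ^ n) ^ 2 := hd.deriv
  rw [hfun.deriv_eq, hdv, hu t ht,
    Real.exp_log (div_pos hC0 (pow_pos hdent N))]
  have e0 : (N:ℝ) - 1 - β = q - 1 := by rw [hq_def]; ring
  rw [e0]
  set h : ℝ := 1 + a * t ^ p with hh_def
  have f1 : t ^ q * t ^ (p - 1) = t ^ (q - 1) * t ^ p := by
    rw [← Real.rpow_add ht, ← Real.rpow_add ht]
    ring_nf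
  have f2 : (n:ℝ) * p = q := by
    rw [hncast, hp_def]
    field_simp
  have f3 : h ^ n = h ^ (n - 1) * h := by
    conv_lhs => rw [show n = (n - 1) + 1 by omega]
    rw [pow_succ]
  have enum : K * (q * t ^ (q - 1)) * h ^ n -
      K * t ^ q * ((n:ℝ) * h ^ (n - 1) * (a * (p * t ^ (p - 1)))) =
      (K * q) * t ^ (q - 1) * h ^ (n - 1) := by
    calc K * (q * t ^ (q - 1)) * h ^ n -
          K * t ^ q * ((n:ℝ) * h ^ (n - 1) * (a * (p * t ^ (p - 1))))
        = (K * q) * t ^ (q - 1) * h ^ (n - 1) * h -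
          (K * ((n:ℝ) * p)) * (t ^ q * t ^ (p - 1)) * a * h ^ (n - 1) := by rw [f3]; ring
      _ = (K * q) * t ^ (q - 1) * h ^ (n - 1) * h -
          (K * q) * (t ^ (q - 1) * t ^ p) * a * h ^ (n - 1) := by rw [f1, f2]
      _ = (K * q) * t ^ (q - 1) * h ^ (n - 1) * (h - a * t ^ p) := by ring
      _ = (K * q) * t ^ (q - 1) * h ^ (n - 1) := by rw [hh_def]; ring
  rw [enum, hKq]
  have edenom : (h ^ n) ^ 2 = h ^ (n - 1) * h ^ N := by
    rw [← pow_mul, ← pow_add]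
    congr 1
    omega
  rw [edenom]
  have hh0 : h ≠ 0 := hdent.ne'
  field_simp
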